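/- arXiv:2307.03158 — 5 statements merged into one kernel-verified Lean document; each statement's English description precedes it below -/
import Mathlib

section
/- Let X be a separable metric space with a totally bounded metric, and let μ be a Borel probability measure on X such that μ(B) ∈ {0,1} for every open ball B with rational radius centered at points of a fixed countable dense set. Then μ is a Dirac measure: there exists a unique b ∈ X with μ({b}) = 1. -/
open MeasureTheory Metric

/-- Key step: for any δ > 0 there is a rational-radius ball of radius < δ centered in D
with full measure. -/
lemma exists_full_ball {X : Type*} [MetricSpace X]
    [MeasurableSpace X] [BorelSpace X]
    (htb : TotallyBounded (Set.univ : Set X))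
    (D : Set X) (hDd : Dense D)
    (μ : Measure X) [IsProbabilityMeasure μ]
    (h01 : ∀ c ∈ D, ∀ r : ℚ, 0 < r →
      μ (ball c (r : ℝ)) = 0 ∨ μ (ball c (r : ℝ)) = 1)
    (δ : ℝ) (hδ : 0 < δ) :
    ∃ c ∈ D, ∃ r : ℚ, 0 < r ∧ (r : ℝ) < δ ∧ μ (ball c (r : ℝ)) = 1 := by
  set ε : ℝ := δ / 3 with hε
  have hε0 : 0 < ε := by positivity
  obtain ⟨t, htfin, htcov⟩ := totallyBounded_iff.mp htb ε hε0
  obtain ⟨q, hq1, hq2⟩ := exists_rat_btwn (show 2 * ε < δ by rw [hε]; linarith)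
  have hq0 : 0 < q := by
    have : (0 : ℝ) < q := lt_trans (by linarith) hq1
    exact_mod_cast this
  choose! d hd1 hd2 using fun x : X => hDd.exists_dist_lt x hε0
  have hcov : (Set.univ : Set X) ⊆ ⋃ x ∈ t, ball (d x) (q : ℝ) := by
    intro z hz
    obtain ⟨x, hx, hzx⟩ := Set.mem_iUnion₂.mp (htcov hz)
    refine Set.mem_iUnion₂.mpr ⟨x, hx, ?_⟩
    have := hd2 x
    rw [mem_ball] at hzx ⊢
    have : dist z (d x) ≤ dist z x + dist x (d x) := dist_triangle _ _ _
    linarith [hzx, hd2 x, hq1.le]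
  by_contra hcon
  push_neg at hcon
  have hzero : ∀ x ∈ t, μ (ball (d x) (q : ℝ)) = 0 := by
    intro x hx
    rcases h01 (d x) (hd1 x) q hq0 with h | h
    · exact h
    · exact absurd h (by
        intro h'
        exact hcon (d x) (hd1 x) q hq0 (lt_of_le_of_lt (le_of_eq rfl) hq2) h')
  have : μ (Set.univ : Set X) = 0 := by
    refine measure_mono_null hcov ?_
    exact (measure_biUnion_null_iff htfin.countable).mpr hzero
  simp [measure_univ] at this

/-- If a Borel probability measure on a separable, totally bounded metric space gives
measure 0 or 1 to every rational-radius ball centered in a fixed countable dense set,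
then it is a Dirac measure: there is a unique point of full measure. -/
theorem zero_one_on_balls_implies_dirac {X : Type*} [MetricSpace X]
    [MeasurableSpace X] [BorelSpace X]
    (htb : TotallyBounded (Set.univ : Set X))
    (D : Set X) (hDc : D.Countable) (hDd : Dense D)
    (μ : Measure X) [IsProbabilityMeasure μ]
    (h01 : ∀ c ∈ D, ∀ r : ℚ, 0 < r →
      μ (ball c (r : ℝ)) = 0 ∨ μ (ball c (r : ℝ)) = 1) :
    ∃! b : X, μ {b} = 1 := by
  have key : ∀ k : ℕ, ∃ c ∈ D, ∃ r : ℚ, 0 < r ∧ (r : ℝ) < 1 / (k + 1) ∧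
      μ (ball c (r : ℝ)) = 1 := fun k =>
    exists_full_ball htb D hDd μ h01 (1 / (k + 1)) (by positivity)
  choose c hcD r hr0 hrlt hrfull using key
  set S : Set X := ⋂ k : ℕ, ball (c k) (r k : ℝ) with hS
  have hSfull : μ S = 1 := by
    have hcompl : μ Sᶜ = 0 := by
      rw [hS, Set.compl_iInter]
      refine measure_iUnion_null fun k => ?_
      have := measure_compl (measurableSet_ball (x := c k) (ε := (r k : ℝ)))
        (measure_ne_top μ _)
      rw [hrfull k, measure_univ] at this
      simpa using this
    have := measure_compl (MeasurableSet.iInter fun k => measurableSet_ball) (measure_ne_top μ S)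
    rw [measure_univ] at this
    have hSm : μ S ≤ 1 := prob_le_one
    have : (1 : ENNReal) - μ S = 0 := by rw [← this]; exact hcompl
    have := tsub_eq_zero_iff_le.mp this
    exact le_antisymm hSm this
  have hSne : S.Nonempty := nonempty_of_measure_ne_zero (by rw [hSfull]; exact one_ne_zero)
  have hsub : ∀ a ∈ S, ∀ b ∈ S, a = b := by
    intro a ha b hb
    by_contra hab
    have hd : 0 < dist a b := dist_pos.mpr hab
    obtain ⟨n, hn⟩ := exists_nat_gt (2 / dist a b)
    have hn' : 2 / dist a b < (n : ℝ) + 1 := lt_trans hn (by linarith)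
    have h2 : 2 < dist a b * ((n : ℝ) + 1) := by
      rwa [div_lt_iff₀ hd, mul_comm] at hn'
    have haB : a ∈ ball (c n) (r n : ℝ) := Set.mem_iInter.mp ha n
    have hbB : b ∈ ball (c n) (r n : ℝ) := Set.mem_iInter.mp hb n
    rw [mem_ball] at haB hbB
    have htri : dist a b ≤ dist a (c n) + dist (c n) b := dist_triangle _ _ _
    rw [dist_comm b (c n)] at hbB
    have : dist a b < 2 * (1 / ((n : ℝ) + 1)) := by
      have := hrlt n
      linarith
    have hpos : (0 : ℝ) < (n : ℝ) + 1 := by positivity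
    rw [mul_one_div] at this
    have h3 : dist a b * ((n : ℝ) + 1) < 2 := (lt_div_iff₀ hpos).mp this
    linarith
  obtain ⟨b, hbS⟩ := hSne
  have hSb : S = {b} := by
    apply Set.eq_singleton_iff_unique_mem.mpr
    exact ⟨hbS, fun x hx => hsub x hx b hbS⟩
  have hb1 : μ {b} = 1 := by rw [← hSb]; exact hSfull
  refine ⟨b, hb1, ?_⟩
  intro b' hb'
  by_contra hne
  have hdisj : Disjoint ({b'} : Set X) {b} := by
    simp [Set.disjoint_singleton, hne]
  have hun := measure_union (μ := μ) hdisj (measurableSet_singleton b)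
  rw [hb', hb1] at hun
  have hle : μ ({b'} ∪ {b} : Set X) ≤ 1 := prob_le_one
  rw [hun] at hle
  norm_num at hle
end

section
/- Let σ be a stochastic kernel from a measurable space X to a separable metrizable space A, and let μ be a finite measure on X. Suppose that for every Borel set Γ ⊆ A, σ(Γ|x) ∈ {0,1} for μ-almost all x. Then there exists a measurable map φ : X → A such that σ(·|x) = δ_{φ(x)} for μ-almost all x ∈ X. -/
open MeasureTheory ProbabilityTheory

/-- If a stochastic kernel from `X` to a separable metrizable Borel space `A` takes only
the values 0 and 1 on each Borel set, `μ`-a.e., then the kernel coincides `μ`-a.e.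
with a Dirac kernel `δ_{φ(x)}` for some measurable `φ : X → A`. -/
theorem kernel_zero_one_implies_dirac {X A : Type*} [MeasurableSpace X]
    [MetricSpace A] [TopologicalSpace.SeparableSpace A] [MeasurableSpace A] [BorelSpace A]
    (σ : Kernel X A) [IsMarkovKernel σ]
    (μ : Measure X) [IsFiniteMeasure μ]
    (h01 : ∀ Γ : Set A, MeasurableSet Γ →
      ∀ᵐ x ∂μ, σ x Γ = 0 ∨ σ x Γ = 1) :
    ∃ φ : X → A, Measurable φ ∧ ∀ᵐ x ∂μ, σ x = Measure.dirac (φ x) := by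
  classical
  rcases isEmpty_or_nonempty A with hA | hA
  · haveI : IsEmpty X := by
      constructor
      intro x
      have h1 : σ x Set.univ = 1 := measure_univ
      rw [Set.univ_eq_empty_iff.mpr hA] at h1
      simp at h1
    exact ⟨fun x => isEmptyElim x, measurable_of_empty _,
      Filter.Eventually.of_forall fun x => isEmptyElim x⟩
  obtain ⟨a, ha⟩ := TopologicalSpace.exists_dense_seq A
  -- balls
  set B : ℕ → ℕ → Set A := fun n k => Metric.closedBall (a k) (1 / (n + 1)) with hB
  have hBmeas : ∀ n k, MeasurableSet (B n k) := fun n k => measurableSet_closedBall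
  -- the good set G
  set G : Set X := {x | ∀ n k, σ x (B n k) = 0 ∨ σ x (B n k) = 1} with hG
  have hGmeas : MeasurableSet G := by
    have : G = ⋂ n, ⋂ k, {x | σ x (B n k) = 0 ∨ σ x (B n k) = 1} := by
      ext x; simp [hG, Set.mem_iInter]
    rw [this]
    refine MeasurableSet.iInter fun n => MeasurableSet.iInter fun k => ?_
    have hm : Measurable fun x => σ x (B n k) := σ.measurable_coe (hBmeas n k)
    exact (hm (measurableSet_singleton 0)).union (hm (measurableSet_singleton 1))
  have hGae : ∀ᵐ x ∂μ, x ∈ G := by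
    have : ∀ᵐ x ∂μ, ∀ n k, σ x (B n k) = 0 ∨ σ x (B n k) = 1 :=
      (ae_all_iff.2 fun n => ae_all_iff.2 fun k => h01 (B n k) (hBmeas n k))
    exact this
  -- on G, for each n there is a ball of measure one
  have hex : ∀ x, ∀ n : ℕ, ∃ k, x ∉ G ∨ σ x (B n k) = 1 := by
    intro x n
    by_cases hx : x ∈ G
    · by_contra hcon
      push_neg at hcon
      have hall0 : ∀ k, σ x (B n k) = 0 := by
        intro k
        rcases hx n k with h | h
        · exact h
        · exact absurd h (hcon k).2
      have hcover : (⋃ k, B n k) = Set.univ := by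
        ext y
        simp only [Set.mem_iUnion, Set.mem_univ, iff_true]
        obtain ⟨k, hk⟩ := ha.exists_dist_lt y (by positivity : (0:ℝ) < 1 / (n + 1))
        exact ⟨k, by simpa [hB, Metric.mem_closedBall, dist_comm] using hk.le⟩
      have h1 : σ x Set.univ = 1 := measure_univ
      rw [← hcover] at h1
      have h0 : σ x (⋃ k, B n k) = 0 := by
        refine measure_iUnion_null fun k => hall0 k
      rw [h0] at h1
      exact zero_ne_one h1
    · exact ⟨0, Or.inl hx⟩
  -- approximating points
  set g : ℕ → X → A := fun n x => a (Nat.find (hex x n)) with hg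
  have hgmeas : ∀ n, Measurable (g n) := by
    intro n
    rw [hg]
    show Measurable fun x => a (Nat.find (hex x n))
    refine Measurable.find (f := fun k x => a k)
      (p := fun k x => x ∉ G ∨ (σ x) (B n k) = 1)
      (fun k => measurable_const) (fun k => ?_) (fun x => hex x n)
    have h1 : MeasurableSet {x | x ∉ G} := hGmeas.compl
    have h2 : MeasurableSet {x | (σ x) (B n k) = 1} :=
      (σ.measurable_coe (hBmeas n k)) (measurableSet_singleton 1)
    exact h1.union h2
  have hgball : ∀ x ∈ G, ∀ n, σ x (Metric.closedBall (g n x) (1 / (n + 1))) = 1 := by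
    intro x hx n
    have := Nat.find_spec (hex x n)
    rcases this with h | h
    · exact absurd hx h
    · exact h
  -- key: for x in G, the kernel is Dirac at some point, which is the limit of g n x
  have hkey : ∀ x ∈ G, ∃ L : A, Filter.Tendsto (fun n => g n x) Filter.atTop (nhds L) ∧
      σ x = Measure.dirac L := by
    intro x hx
    set S : Set A := ⋂ n, Metric.closedBall (g n x) (1 / (n + 1)) with hS
    have hS1 : σ x S = 1 := by
      have hc : σ x Sᶜ = 0 := by
        rw [hS, Set.compl_iInter]
        refine measure_iUnion_null fun n => ?_
        have := hgball x hx n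
        rw [measure_compl measurableSet_closedBall (measure_ne_top _ _), this]
        simp
      have := measure_compl (μ := σ x) (s := Sᶜ) (MeasurableSet.iInter
        (fun n => (measurableSet_closedBall : MeasurableSet
          (Metric.closedBall (g n x) (1 / (n + 1))))) ).compl (measure_ne_top _ _)
      rw [compl_compl, hc] at this
      simpa using this
    have hSne : S.Nonempty := by
      rcases S.eq_empty_or_nonempty with h | h
      · rw [h] at hS1; simp at hS1
      · exact h
    obtain ⟨L, hL⟩ := hSne
    have hdist : ∀ n, dist L (g n x) ≤ 1 / (n + 1) := by
      intro n
      have := Set.mem_iInter.1 hL n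
      simpa [Metric.mem_closedBall] using this
    have htend : Filter.Tendsto (fun n => g n x) Filter.atTop (nhds L) := by
      rw [tendsto_iff_dist_tendsto_zero]
      refine squeeze_zero (fun n => dist_nonneg)
        (fun n => le_trans (le_of_eq (dist_comm _ _)) (hdist n)) ?_
      exact tendsto_one_div_add_atTop_nhds_zero_nat
    have hSsub : S ⊆ {L} := by
      intro y hy
      have hd : ∀ n : ℕ, dist y L ≤ 2 / (n + 1) := by
        intro n
        have h1 := Set.mem_iInter.1 hy n
        have h2 := hdist n
        have := dist_triangle y (g n x) L
        rw [Metric.mem_closedBall] at h1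
        have h3 : dist (g n x) L ≤ 1 / (n + 1) := by rwa [dist_comm]
        calc dist y L ≤ dist y (g n x) + dist (g n x) L := this
          _ ≤ 1 / (n + 1) + 1 / (n + 1) := add_le_add h1 h3
          _ = 2 / (n + 1) := by ring
      have h2n : Filter.Tendsto (fun n : ℕ => 2 / ((n:ℝ) + 1)) Filter.atTop (nhds 0) := by
        have := (tendsto_one_div_add_atTop_nhds_zero_nat (𝕜 := ℝ)).const_mul 2
        simpa [mul_one_div, div_eq_mul_inv] using this
      have hle : dist y L ≤ 0 := ge_of_tendsto' h2n hd
      have : y = L := by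
        rw [← dist_le_zero]; exact hle
      simpa using this
    have hL1 : σ x {L} = 1 := by
      have h1 : (1 : ENNReal) = σ x S := hS1.symm
      have h2 : σ x S ≤ σ x {L} := measure_mono hSsub
      have h3 : σ x {L} ≤ 1 := prob_le_one
      exact le_antisymm h3 (h1 ▸ h2)
    refine ⟨L, htend, ?_⟩
    ext s hs
    rw [Measure.dirac_apply' L hs]
    by_cases hLs : L ∈ s
    · have h1 : σ x {L} ≤ σ x s := measure_mono (by simpa using hLs)
      have h2 : σ x s ≤ 1 := prob_le_one
      rw [hL1] at h1
      simp [Set.indicator_of_mem hLs, le_antisymm h2 h1]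
    · have hsub : s ⊆ {L}ᶜ := fun y hy => by
        simp only [Set.mem_compl_iff, Set.mem_singleton_iff]
        rintro rfl; exact hLs hy
      have h0 : σ x ({L}ᶜ) = 0 := by
        rw [measure_compl (measurableSet_singleton L) (measure_ne_top _ _), hL1]
        simp
      have : σ x s ≤ 0 := h0 ▸ measure_mono hsub
      simp [Set.indicator_of_notMem hLs, le_antisymm this zero_le]
  -- off G, g is constant
  have hoff : ∀ x, x ∉ G → ∀ n, g n x = a 0 := by
    intro x hx n
    have : Nat.find (hex x n) = 0 := by
      rw [Nat.find_eq_zero]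
      exact Or.inl hx
    simp [hg, this]
  -- define φ as the pointwise limit
  set φ : X → A := fun x => Filter.limUnder Filter.atTop (fun n => g n x) with hφ
  have htendall : ∀ x, Filter.Tendsto (fun n => g n x) Filter.atTop (nhds (φ x)) := by
    intro x
    by_cases hx : x ∈ G
    · obtain ⟨L, hT, _⟩ := hkey x hx
      show Filter.Tendsto (fun n => g n x) Filter.atTop
        (nhds (Filter.limUnder Filter.atTop fun n => g n x))
      rw [hT.limUnder_eq]
      exact hT
    · have hTc : Filter.Tendsto (fun n => g n x) Filter.atTop (nhds (a 0)) := by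
        have : (fun n => g n x) = fun _ => a 0 := funext fun n => hoff x hx n
        rw [this]; exact tendsto_const_nhds
      show Filter.Tendsto (fun n => g n x) Filter.atTop
        (nhds (Filter.limUnder Filter.atTop fun n => g n x))
      rw [hTc.limUnder_eq]
      exact hTc
  refine ⟨φ, ?_, ?_⟩
  · exact measurable_of_tendsto_metrizable hgmeas (tendsto_pi_nhds.2 htendall)
  · filter_upwards [hGae] with x hx
    obtain ⟨L, hT, hD⟩ := hkey x hx
    have hφL : φ x = L := hT.limUnder_eq
    rw [hφL]; exact hD
end

section
/- Let σ, σ₁, σ₂ be stochastic kernels from X to A with σ(·|x) = α σ₁(·|x) + (1-α) σ₂(·|x) for all x, where α ∈ (0,1). If for some Borel sets Γ_A ⊆ A, Γ_X ⊆ X and some measure μ on X we have μ(Γ_X) > 0 and σ(Γ_A|x) ∈ [α, 1-α] for all x ∈ Γ_X, then one can construct stochastic kernels σ₁', σ₂' with α σ₁' + (1-α) σ₂' = σ and σ₂'(Γ_A|x) − σ₁'(Γ_A|x) ≥ α/(1-α) > 0 for all x ∈ Γ_X. Concretely, defining σ₁'(Γ|x) = σ(Γ ∩ Γ_A^c|x)/σ(Γ_A^c|x)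 and σ₂'(Γ|x) = σ(Γ ∩ Γ_A|x)/(1-α) + σ(Γ ∩ Γ_A^c|x)(σ(Γ_A^c|x) − α)/((1-α)σ(Γ_A^c|x)) for x ∈ Γ_X (and both equal to σ otherwise) yields such kernels. -/
open MeasureTheory ProbabilityTheory ENNReal

private lemma kernel_splitting_univ_aux (α c a : ℝ≥0∞) (hαc : α ≤ c)
    (hc0 : c ≠ 0) (hcT : c ≠ ⊤) (h1α0 : (1:ℝ≥0∞) - α ≠ 0) (h1αT : (1:ℝ≥0∞) - α ≠ ⊤)
    (hsum : a + c = 1) :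
    a / (1 - α) + c * (c - α) / ((1 - α) * c) = 1 := by
  have h2 : c * c⁻¹ = 1 := ENNReal.mul_inv_cancel hc0 hcT
  simp only [div_eq_mul_inv, ENNReal.mul_inv (Or.inl h1α0) (Or.inr hc0)]
  rw [(by ring : a * (1 - α)⁻¹ + c * (c - α) * ((1 - α)⁻¹ * c⁻¹)
      = a * (1 - α)⁻¹ + c * c⁻¹ * ((c - α) * (1 - α)⁻¹)), h2, one_mul,
    ← add_mul]
  have h3 : a + (c - α) = 1 - α := by
    refine ENNReal.eq_sub_of_add_eq (ne_top_of_le_ne_top hcT hαc) ?_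
    rw [add_assoc, tsub_add_cancel_of_le hαc, hsum]
  rw [h3]
  exact ENNReal.mul_inv_cancel h1α0 h1αT

private lemma kernel_splitting_mix_aux (α c b d : ℝ≥0∞) (hαc : α ≤ c)
    (hc0 : c ≠ 0) (hcT : c ≠ ⊤) (h1α0 : (1:ℝ≥0∞) - α ≠ 0) (h1αT : (1:ℝ≥0∞) - α ≠ ⊤) :
    α * (d / c) + (1 - α) * (b / (1 - α) + d * (c - α) / ((1 - α) * c)) = b + d := by
  have h1 : (1 - α) * (1 - α)⁻¹ = 1 := ENNReal.mul_inv_cancel h1α0 h1αT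
  have h2 : c * c⁻¹ = 1 := ENNReal.mul_inv_cancel hc0 hcT
  simp only [div_eq_mul_inv, ENNReal.mul_inv (Or.inl h1α0) (Or.inr hc0)]
  rw [(by ring : α * (d * c⁻¹) + (1 - α) * (b * (1 - α)⁻¹ + d * (c - α) * ((1 - α)⁻¹ * c⁻¹))
      = b * ((1 - α) * (1 - α)⁻¹) + (α * (d * c⁻¹) + ((1 - α) * (1 - α)⁻¹) * ((c - α) * (d * c⁻¹)))),
    h1]
  simp only [one_mul, mul_one]
  rw [← add_mul, add_tsub_cancel_of_le hαc, (by ring : c * (d * c⁻¹) = c * c⁻¹ * d), h2, one_mul]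

/-- Splitting a randomized kernel: if `σ = α σ₁ + (1-α) σ₂` pointwise is desired and
`σ(Γ_A|x) ∈ [α, 1-α]` on a set `Γ_X` of positive measure, then there exist stochastic
kernels `σ₁'`, `σ₂'`, given on `Γ_X` by the explicit formulas
`σ₁'(Γ|x) = σ(Γ ∩ Γ_Aᶜ|x)/σ(Γ_Aᶜ|x)` and
`σ₂'(Γ|x) = σ(Γ ∩ Γ_A|x)/(1-α) + σ(Γ ∩ Γ_Aᶜ|x)(σ(Γ_Aᶜ|x) - α)/((1-α)σ(Γ_Aᶜ|x))`
(and equal to `σ` off `Γ_X`), such that `α σ₁' + (1-α) σ₂' = σ` and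
`σ₂'(Γ_A|x) - σ₁'(Γ_A|x) ≥ α/(1-α)` for all `x ∈ Γ_X`. -/
theorem kernel_splitting {X A : Type*} [MeasurableSpace X] [MeasurableSpace A]
    (σ : Kernel X A) [IsMarkovKernel σ]
    (α : ℝ≥0∞) (hα0 : 0 < α) (hα1 : α < 1)
    (ΓA : Set A) (hΓA : MeasurableSet ΓA)
    (ΓX : Set X) (hΓX : MeasurableSet ΓX)
    (μ : Measure X) (hμ : 0 < μ ΓX)
    (hmid : ∀ x ∈ ΓX, α ≤ σ x ΓA ∧ σ x ΓA ≤ 1 - α) :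
    ∃ σ₁' σ₂' : Kernel X A, IsMarkovKernel σ₁' ∧ IsMarkovKernel σ₂' ∧
      (∀ x ∉ ΓX, σ₁' x = σ x ∧ σ₂' x = σ x) ∧
      (∀ x ∈ ΓX, ∀ Γ : Set A, MeasurableSet Γ →
        σ₁' x Γ = σ x (Γ ∩ ΓAᶜ) / σ x ΓAᶜ ∧
        σ₂' x Γ = σ x (Γ ∩ ΓA) / (1 - α)
          + σ x (Γ ∩ ΓAᶜ) * (σ x ΓAᶜ - α) / ((1 - α) * σ x ΓAᶜ)) ∧
      (∀ x, ∀ Γ : Set A, MeasurableSet Γ →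
        σ x Γ = α * σ₁' x Γ + (1 - α) * σ₂' x Γ) ∧
      (∀ x ∈ ΓX, α / (1 - α) ≤ σ₂' x ΓA - σ₁' x ΓA) := by
  classical
  have h1α0 : (1 : ℝ≥0∞) - α ≠ 0 := by
    simpa [tsub_eq_zero_iff_le] using not_le.mpr hα1
  have h1αT : (1 : ℝ≥0∞) - α ≠ ⊤ := by
    exact ne_top_of_le_ne_top one_ne_top tsub_le_self
  -- basic facts for `x ∈ ΓX`
  have hc : ∀ x ∈ ΓX, σ x ΓA + σ x ΓAᶜ = 1 ∧ α ≤ σ x ΓAᶜ ∧ σ x ΓAᶜ ≤ 1 := by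
    intro x hx
    have h1 : σ x ΓA ≤ 1 := prob_le_one
    have hcompl : σ x ΓAᶜ = 1 - σ x ΓA := by
      rw [measure_compl hΓA (measure_ne_top _ _), measure_univ]
    refine ⟨?_, ?_, ?_⟩
    · rw [hcompl, add_tsub_cancel_of_le h1]
    · rw [hcompl]
      calc α = 1 - (1 - α) := (ENNReal.sub_sub_cancel one_ne_top hα1.le).symm
        _ ≤ 1 - σ x ΓA := tsub_le_tsub_left (hmid x hx).2 1
    · rw [hcompl]; exact tsub_le_self
  have hc0 : ∀ x ∈ ΓX, σ x ΓAᶜ ≠ 0 := fun x hx =>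
    (lt_of_lt_of_le hα0 (hc x hx).2.1).ne'
  have hcT : ∀ x ∈ ΓX, σ x ΓAᶜ ≠ ⊤ := fun x hx => measure_ne_top _ _
  -- the two auxiliary measure families
  set m₁ : X → Measure A := fun x => (σ x ΓAᶜ)⁻¹ • (σ x).restrict ΓAᶜ with hm₁
  set m₂ : X → Measure A := fun x =>
    (1 - α)⁻¹ • (σ x).restrict ΓA
      + ((σ x ΓAᶜ - α) / ((1 - α) * σ x ΓAᶜ)) • (σ x).restrict ΓAᶜ with hm₂
  have hm₁app : ∀ x, ∀ Γ : Set A, MeasurableSet Γ →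
      m₁ x Γ = σ x (Γ ∩ ΓAᶜ) / σ x ΓAᶜ := by
    intro x Γ hΓ
    simp [hm₁, Measure.restrict_apply hΓ, ENNReal.div_eq_inv_mul]
  have hm₂app : ∀ x, ∀ Γ : Set A, MeasurableSet Γ →
      m₂ x Γ = σ x (Γ ∩ ΓA) / (1 - α)
        + σ x (Γ ∩ ΓAᶜ) * (σ x ΓAᶜ - α) / ((1 - α) * σ x ΓAᶜ) := by
    intro x Γ hΓ
    simp only [hm₂, Measure.coe_add, Pi.add_apply, Measure.smul_apply, smul_eq_mul,
      Measure.restrict_apply hΓ, div_eq_mul_inv]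
    ring
  -- measurability
  have hk₁ : Measurable m₁ := by
    rw [Measure.measurable_measure]
    intro s hs
    simp only [hm₁, Measure.smul_apply, Measure.restrict_apply hs, smul_eq_mul]
    exact ((σ.measurable_coe hΓA.compl).inv).mul (σ.measurable_coe (hs.inter hΓA.compl))
  have hk₂ : Measurable m₂ := by
    rw [Measure.measurable_measure]
    intro s hs
    simp only [hm₂, Measure.coe_add, Pi.add_apply, Measure.smul_apply,
      Measure.restrict_apply hs, smul_eq_mul]
    exact (measurable_const.mul (σ.measurable_coe (hs.inter hΓA))).add
      ((((σ.measurable_coe hΓA.compl).sub measurable_const).div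
        (measurable_const.mul (σ.measurable_coe hΓA.compl))).mul
        (σ.measurable_coe (hs.inter hΓA.compl)))
  set σ₁' : Kernel X A := Kernel.piecewise hΓX ⟨m₁, hk₁⟩ σ with hσ₁'
  set σ₂' : Kernel X A := Kernel.piecewise hΓX ⟨m₂, hk₂⟩ σ with hσ₂'
  have happ₁ : ∀ x ∈ ΓX, ∀ Γ : Set A, MeasurableSet Γ →
      σ₁' x Γ = σ x (Γ ∩ ΓAᶜ) / σ x ΓAᶜ := by
    intro x hx Γ hΓ
    rw [hσ₁', Kernel.piecewise_apply, if_pos hx]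
    exact hm₁app x Γ hΓ
  have happ₂ : ∀ x ∈ ΓX, ∀ Γ : Set A, MeasurableSet Γ →
      σ₂' x Γ = σ x (Γ ∩ ΓA) / (1 - α)
        + σ x (Γ ∩ ΓAᶜ) * (σ x ΓAᶜ - α) / ((1 - α) * σ x ΓAᶜ) := by
    intro x hx Γ hΓ
    rw [hσ₂', Kernel.piecewise_apply, if_pos hx]
    exact hm₂app x Γ hΓ
  refine ⟨σ₁', σ₂', ?_, ?_, ?_, ?_, ?_, ?_⟩
  · -- σ₁' Markov
    constructor
    intro x
    rcases em (x ∈ ΓX) with hx | hx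
    · constructor
      rw [happ₁ x hx _ MeasurableSet.univ, Set.univ_inter]
      exact ENNReal.div_self (hc0 x hx) (hcT x hx)
    · rw [hσ₁', Kernel.piecewise_apply, if_neg hx]
      infer_instance
  · -- σ₂' Markov
    constructor
    intro x
    rcases em (x ∈ ΓX) with hx | hx
    · constructor
      rw [happ₂ x hx _ MeasurableSet.univ, Set.univ_inter, Set.univ_inter]
      obtain ⟨hsum, hαc, hc1⟩ := hc x hx
      exact kernel_splitting_univ_aux α _ _ hαc (hc0 x hx) (hcT x hx) h1α0 h1αT hsum
    · rw [hσ₂', Kernel.piecewise_apply, if_neg hx]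
      infer_instance
  · -- off ΓX
    intro x hx
    constructor <;> rw [Kernel.piecewise_apply, if_neg hx]
  · -- formulas on ΓX
    intro x hx Γ hΓ
    exact ⟨happ₁ x hx Γ hΓ, happ₂ x hx Γ hΓ⟩
  · -- mixing identity
    intro x Γ hΓ
    rcases em (x ∈ ΓX) with hx | hx
    · obtain ⟨hsum, hαc, hc1⟩ := hc x hx
      rw [happ₁ x hx Γ hΓ, happ₂ x hx Γ hΓ]
      have hsplit : σ x (Γ ∩ ΓA) + σ x (Γ ∩ ΓAᶜ) = σ x Γ := by
        have := measure_inter_add_diff (μ := σ x) Γ hΓA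
        rwa [Set.diff_eq] at this
      rw [kernel_splitting_mix_aux α _ _ _ hαc (hc0 x hx) (hcT x hx) h1α0 h1αT]
      exact hsplit.symm
    · rw [hσ₁', hσ₂', Kernel.piecewise_apply, Kernel.piecewise_apply, if_neg hx,
        if_neg hx, ← add_mul, add_tsub_cancel_of_le hα1.le, one_mul]
  · -- separation
    intro x hx
    rw [happ₁ x hx ΓA hΓA, happ₂ x hx ΓA hΓA, Set.inter_compl_self, Set.inter_self,
      measure_empty]
    simp only [ENNReal.zero_div, zero_mul, add_zero, tsub_zero]
    exact ENNReal.div_le_div_right (hmid x hx).1 _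
end

section
/- Let E be a nonempty convex subset of ℝ^n and u ∈ E a Pareto optimal point of E. Then the minimal face G(u) of E containing u consists entirely of Pareto optimal points of E: G(u) ⊆ Par(E). -/
variable {n : ℕ}

/-- `F` is a face of the convex set `E` in `ℝⁿ`. -/
def IsFace (E F : Set (Fin n → ℝ)) : Prop :=
  F ⊆ E ∧ Convex ℝ F ∧
    ∀ x₁ ∈ E, ∀ x₂ ∈ E, ∀ α : ℝ, 0 < α → α < 1 →
      α • x₁ + (1 - α) • x₂ ∈ F → x₁ ∈ F ∧ x₂ ∈ F

/-- The set of Pareto optimal points of `E`: points `u ∈ E` such that no `v ∈ E`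
satisfies `v ≤ u` componentwise except `v = u`. -/
def Par (E : Set (Fin n → ℝ)) : Set (Fin n → ℝ) :=
  {u ∈ E | ∀ v ∈ E, (∀ i, v i ≤ u i) → v = u}

/-- The minimal face of `E` containing `u`: the intersection of all faces containing `u`. -/
def minimalFace (E : Set (Fin n → ℝ)) (u : Fin n → ℝ) : Set (Fin n → ℝ) :=
  ⋂₀ {F | IsFace E F ∧ u ∈ F}

/-- Auxiliary: the set of points `x ∈ E` such that `u` lies in the open segment between
`x` and some point of `E`. This is a face of `E` containing `u`. -/
def genFace (E : Set (Fin n → ℝ)) (u : Fin n → ℝ) : Set (Fin n → ℝ) :=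
  {x | x ∈ E ∧ ∃ y ∈ E, ∃ α : ℝ, 0 < α ∧ α < 1 ∧ α • x + (1 - α) • y = u}

lemma genFace_isFace (E : Set (Fin n → ℝ)) (hconv : Convex ℝ E) (u : Fin n → ℝ) :
    IsFace E (genFace E u) := by
  refine ⟨fun x hx => hx.1, ?_, ?_⟩
  · -- convexity
    rintro x₁ ⟨hx₁E, y₁, hy₁E, α₁, hα₁0, hα₁1, h₁⟩ x₂ ⟨hx₂E, y₂, hy₂E, α₂, hα₂0, hα₂1, h₂⟩
      a b ha hb hab
    rcases eq_or_lt_of_le ha with h0 | ha'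
    · have : b = 1 := by linarith
      subst this
      simpa [← h0] using ⟨hx₂E, y₂, hy₂E, α₂, hα₂0, hα₂1, h₂⟩
    rcases eq_or_lt_of_le hb with h0 | hb'
    · have : a = 1 := by linarith
      subst this
      simpa [← h0] using ⟨hx₁E, y₁, hy₁E, α₁, hα₁0, hα₁1, h₁⟩
    refine ⟨hconv hx₁E hx₂E ha hb hab, ?_⟩
    set D : ℝ := α₂ * a + α₁ * b with hD
    have hDpos : 0 < D := by positivity
    have hDne : D ≠ 0 := ne_of_gt hDpos
    set K : ℝ := D - α₁ * α₂ with hK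
    have hKey : K = a * (α₂ * (1 - α₁)) + b * (α₁ * (1 - α₂)) := by
      rw [hK, hD]; linear_combination (α₁ * α₂) * hab
    have hKpos : 0 < K := by
      rw [hKey]
      have t1 : 0 < a * (α₂ * (1 - α₁)) := by
        apply mul_pos ha'; apply mul_pos hα₂0; linarith
      have t2 : 0 < b * (α₁ * (1 - α₂)) := by
        apply mul_pos hb'; apply mul_pos hα₁0; linarith
      linarith
    have hKne : K ≠ 0 := ne_of_gt hKpos
    set α : ℝ := α₁ * α₂ / D with hα
    have hα0 : 0 < α := by positivity
    have hα1 : α < 1 := by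
      rw [hα, div_lt_one hDpos]
      have := hKpos
      rw [hK] at this; linarith
    set w₁ : ℝ := α₂ * a * (1 - α₁) / K with hw₁
    set w₂ : ℝ := α₁ * b * (1 - α₂) / K with hw₂
    have hw₁0 : 0 ≤ w₁ := by
      rw [hw₁]
      apply div_nonneg _ hKpos.le
      apply mul_nonneg (mul_nonneg hα₂0.le ha) (by linarith)
    have hw₂0 : 0 ≤ w₂ := by
      rw [hw₂]
      apply div_nonneg _ hKpos.le
      apply mul_nonneg (mul_nonneg hα₁0.le hb) (by linarith)
    have hwsum : w₁ + w₂ = 1 := by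
      rw [hw₁, hw₂, ← add_div, div_eq_one_iff_eq hKne, hKey]; ring
    refine ⟨w₁ • y₁ + w₂ • y₂, hconv hy₁E hy₂E hw₁0 hw₂0 hwsum, α, hα0, hα1, ?_⟩
    funext i
    have e₁ := congrFun h₁ i
    have e₂ := congrFun h₂ i
    simp only [Pi.add_apply, Pi.smul_apply, smul_eq_mul] at e₁ e₂ ⊢
    have h1α : 1 - α = K / D := by rw [hα, hK]; field_simp
    have comb : (α₂ * a / D) * (α₁ * x₁ i + (1 - α₁) * y₁ i)
        + (α₁ * b / D) * (α₂ * x₂ i + (1 - α₂) * y₂ i) = u i := by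
      rw [e₁, e₂, hD]; field_simp
    rw [hw₁, hw₂, hα, h1α, ← comb]
    field_simp
    ring
  · -- extreme point property
    rintro x₁ hx₁E x₂ hx₂E β hβ0 hβ1 ⟨-, y, hyE, α, hα0, hα1, h⟩
    constructor
    · refine ⟨hx₁E, ?_⟩
      have h1 : 0 < 1 - α * β := by nlinarith
      refine ⟨(α * (1 - β) / (1 - α * β)) • x₂ + ((1 - α) / (1 - α * β)) • y,
        hconv hx₂E hyE (div_nonneg (by nlinarith) h1.le) (div_nonneg (by linarith) h1.le)
          (by field_simp; ring), α * β,
        by positivity, by nlinarith, ?_⟩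
      funext i
      have e := congrFun h i
      simp only [Pi.add_apply, Pi.smul_apply, smul_eq_mul] at e ⊢
      field_simp
      linear_combination e
    · refine ⟨hx₂E, ?_⟩
      have h2 : 0 < 1 - α * (1 - β) := by nlinarith
      refine ⟨(α * β / (1 - α * (1 - β))) • x₁ + ((1 - α) / (1 - α * (1 - β))) • y,
        hconv hx₁E hyE (div_nonneg (by nlinarith) h2.le) (div_nonneg (by linarith) h2.le)
          (by field_simp; ring), α * (1 - β),
        by nlinarith, by nlinarith, ?_⟩
      funext i
      have e := congrFun h i
      simp only [Pi.add_apply, Pi.smul_apply, smul_eq_mul] at e ⊢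
      field_simp
      linear_combination e

/-- If `u` is Pareto optimal in a nonempty convex set `E ⊆ ℝⁿ`, then the minimal face of
`E` containing `u` consists entirely of Pareto optimal points. -/
theorem minimalFace_subset_pareto (E : Set (Fin n → ℝ)) (hE : E.Nonempty)
    (hconv : Convex ℝ E) (u : Fin n → ℝ) (hu : u ∈ Par E) :
    minimalFace E u ⊆ Par E := by
  obtain ⟨huE, hupar⟩ := hu
  have huF : u ∈ genFace E u :=
    ⟨huE, u, huE, 1/2, by norm_num, by norm_num, by funext i; simp; ring⟩
  intro x hx
  have hxF : x ∈ genFace E u := hx _ ⟨genFace_isFace E hconv u, huF⟩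
  obtain ⟨hxE, y, hyE, α, hα0, hα1, h⟩ := hxF
  refine ⟨hxE, fun v hvE hvle => ?_⟩
  have hwE : α • v + (1 - α) • y ∈ E :=
    hconv hvE hyE (le_of_lt hα0) (by linarith) (by ring)
  have hwle : ∀ i, (α • v + (1 - α) • y) i ≤ u i := by
    intro i
    have e := congrFun h i
    simp only [Pi.add_apply, Pi.smul_apply, smul_eq_mul] at e ⊢
    nlinarith [hvle i]
  have hwu := hupar _ hwE hwle
  funext i
  have e₁ := congrFun h i
  have e₂ := congrFun hwu i
  simp only [Pi.add_apply, Pi.smul_apply, smul_eq_mul] at e₁ e₂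
  nlinarith [e₁, e₂]
end

section
/- Consider a substochastic transition kernel Q(dy|x) on a Borel space X (interpreted as a Markov chain with killing) with initial state x₀, and suppose the occupation measure M(Γ) = Σ_{n≥0} Qⁿ(Γ|x₀) is finite on X. Let f : X → ℝ be bounded measurable and define v(x) := Σ_{n≥0} E_x[f(X_n)] (well defined and finite for M-a.e. x). Then v satisfies v(x) = f(x) + ∫_X v(y) Q(dy|x) for M-almost all x; moreover, if w : X → ℝ is bounded measurable and satisfies w(x) = f(x) + ∫_X w(y) Q(dy|x) M-a.e., then w(x) = v(x) for M-almost all x ∈ X. -/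
open MeasureTheory ProbabilityTheory ENNReal

/-- The `n`-step kernel of a (sub)stochastic kernel `Q`. -/
noncomputable def iterK {X : Type*} [MeasurableSpace X] (Q : Kernel X X) : ℕ → Kernel X X
  | 0 => Kernel.id
  | n + 1 => Q ∘ₖ iterK Q n

section Aux

variable {X : Type*} [MeasurableSpace X]

lemma iterK_zero (Q : Kernel X X) : iterK Q 0 = Kernel.id := rfl

lemma iterK_succ (Q : Kernel X X) (n : ℕ) : iterK Q (n + 1) = Q ∘ₖ iterK Q n := rfl

instance iterK_isFiniteKernel (Q : Kernel X X) [IsFiniteKernel Q] (n : ℕ) :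
    IsFiniteKernel (iterK Q n) := by
  induction n with
  | zero => exact (inferInstance : IsFiniteKernel (Kernel.id : Kernel X X))
  | succ n ih => exact (inferInstance : IsFiniteKernel (Q ∘ₖ iterK Q n))

lemma iterK_comp (Q : Kernel X X) [IsFiniteKernel Q] (n m : ℕ) :
    iterK Q n ∘ₖ iterK Q m = iterK Q (n + m) := by
  induction n with
  | zero => rw [iterK_zero, Kernel.id_comp, Nat.zero_add]
  | succ n ih =>
      rw [iterK_succ, Kernel.comp_assoc, ih, ← iterK_succ]
      congr 1
      omega

lemma iterK_succ' (Q : Kernel X X) [IsFiniteKernel Q] (n : ℕ) :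
    iterK Q (n + 1) = iterK Q n ∘ₖ Q := by
  have h1 : iterK Q 1 = Q := by
    rw [iterK_succ, iterK_zero, Kernel.comp_id]
  have := iterK_comp Q n 1
  rw [h1] at this
  rw [← this]

lemma iterK_univ_le (Q : Kernel X X) (hsub : ∀ x, Q x Set.univ ≤ 1) (n : ℕ) (x : X) :
    iterK Q n x Set.univ ≤ 1 := by
  induction n with
  | zero =>
      rw [iterK_zero, Kernel.id_apply]
      simp
  | succ n ih =>
      rw [iterK_succ, Kernel.comp_apply' _ _ _ MeasurableSet.univ]
      calc ∫⁻ y, Q y Set.univ ∂(iterK Q n x) ≤ ∫⁻ _, 1 ∂(iterK Q n x) :=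
            lintegral_mono fun y => hsub y
        _ = iterK Q n x Set.univ := by simp
        _ ≤ 1 := ih

/-- A bounded measurable real function is integrable w.r.t. a finite measure. -/
lemma integrable_of_abs_le {α : Type*} [MeasurableSpace α] (μ : Measure α) [IsFiniteMeasure μ]
    {g : α → ℝ} (hg : Measurable g) (C : ℝ) (hb : ∀ x, |g x| ≤ C) : Integrable g μ :=
  (integrable_const C).mono' hg.aestronglyMeasurable
    (Filter.Eventually.of_forall fun x => by simpa [Real.norm_eq_abs] using hb x)

/-- Measurability of `x ↦ ∫ g dκ(x)`. -/
lemma measurable_kint (κ : Kernel X X) [IsSFiniteKernel κ] {g : X → ℝ} (hg : Measurable g) :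
    Measurable fun x => ∫ y, g y ∂κ x := by
  have h : StronglyMeasurable (Function.uncurry fun (_ : X) (y : X) => g y) :=
    (hg.comp measurable_snd).stronglyMeasurable
  exact h.integral_kernel_prod_right.measurable

/-- Bochner integral against a composition of kernels. -/
lemma integral_comp' (η κ : Kernel X X) [IsFiniteKernel η] [IsFiniteKernel κ] (a : X)
    {g : X → ℝ} (hg : Measurable g) (C : ℝ) (hb : ∀ x, |g x| ≤ C) :
    ∫ y, g y ∂((η ∘ₖ κ) a) = ∫ x, ∫ y, g y ∂η x ∂κ a := by
  rw [Kernel.comp_eq_snd_compProd, Kernel.snd_apply,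
    integral_map measurable_snd.aemeasurable hg.aestronglyMeasurable]
  have hint : Integrable (fun p : X × X => g p.2) ((κ ⊗ₖ Kernel.prodMkLeft X η) a) :=
    integrable_of_abs_le _ (hg.comp measurable_snd) C fun p => hb p.2
  rw [ProbabilityTheory.integral_compProd hint]
  simp [Kernel.prodMkLeft_apply]

lemma norm_int_le (Q : Kernel X X) [IsFiniteKernel Q] {g : X → ℝ} (hg : Measurable g)
    (C : ℝ) (hb : ∀ x, |g x| ≤ C) (n : ℕ) (y : X) :
    ‖∫ z, g z ∂(iterK Q n y)‖ ≤ C * (iterK Q n y Set.univ).toReal :=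
  norm_integral_le_of_norm_le_const
    (Filter.Eventually.of_forall fun z => by simpa [Real.norm_eq_abs] using hb z)

lemma summable_int (Q : Kernel X X) [IsFiniteKernel Q] {g : X → ℝ} (hg : Measurable g)
    (C : ℝ) (hb : ∀ x, |g x| ≤ C) (y : X) (hy : (∑' n, iterK Q n y Set.univ) < ∞) :
    Summable fun n => ∫ z, g z ∂(iterK Q n y) := by
  have h1 : Summable (fun n => C * (iterK Q n y Set.univ).toReal) :=
    (ENNReal.summable_toReal hy.ne).mul_left C
  exact Summable.of_norm_bounded h1 fun n => norm_int_le Q hg C hb n y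

/-- `N x = ∑ₙ Qⁿ(X|x)` is finite `M`-a.e. -/
lemma ae_N_lt_top (Q : Kernel X X) [IsFiniteKernel Q] (x₀ : X)
    (hM : (∑' n : ℕ, iterK Q n x₀ Set.univ) < ∞) :
    ∀ᵐ x ∂(Measure.sum fun n : ℕ => iterK Q n x₀),
      (∑' n : ℕ, iterK Q n x Set.univ) < ∞ := by
  rw [Measure.ae_sum_iff]
  intro m
  have hmeas : Measurable fun x => ∑' n : ℕ, iterK Q n x Set.univ :=
    Measurable.ennreal_tsum fun n => (iterK Q n).measurable_coe MeasurableSet.univ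
  refine ae_lt_top hmeas ?_
  rw [lintegral_tsum fun n => ((iterK Q n).measurable_coe MeasurableSet.univ).aemeasurable]
  have heq : ∀ n : ℕ, ∫⁻ x, iterK Q n x Set.univ ∂(iterK Q m x₀)
      = iterK Q (n + m) x₀ Set.univ := by
    intro n
    rw [← Kernel.comp_apply' _ _ _ MeasurableSet.univ, iterK_comp]
  rw [tsum_congr heq]
  refine ne_of_lt (lt_of_le_of_lt ?_ hM)
  exact tsum_comp_le_tsum_of_injective (add_left_injective m) _

/-- The pointwise Poisson equation at any point where `N` is finite. -/
lemma poisson_at (Q : Kernel X X) [IsFiniteKernel Q]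
    {f : X → ℝ} (hf : Measurable f) (Cf : ℝ) (hCf0 : 0 ≤ Cf) (hbf : ∀ x, |f x| ≤ Cf)
    (x : X) (hN : (∑' n : ℕ, iterK Q n x Set.univ) < ∞) :
    (∑' n : ℕ, ∫ y, f y ∂(iterK Q n x))
      = f x + ∫ y, (∑' n : ℕ, ∫ z, f z ∂(iterK Q n y)) ∂(Q x) := by
  have hsum : Summable fun n => ∫ y, f y ∂(iterK Q n x) := summable_int Q hf Cf hbf x hN
  rw [Summable.tsum_eq_zero_add hsum]
  have h0 : ∫ y, f y ∂(iterK Q 0 x) = f x := by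
    rw [iterK_zero, Kernel.id_apply, integral_dirac' f x hf.stronglyMeasurable]
  rw [h0]
  congr 1
  have hstep : ∀ n : ℕ, ∫ y, f y ∂(iterK Q (n + 1) x)
      = ∫ y, (∫ z, f z ∂(iterK Q n y)) ∂(Q x) := by
    intro n
    rw [iterK_succ', integral_comp' (iterK Q n) Q x hf Cf hbf]
  rw [tsum_congr hstep]
  -- swap tsum and integral
  refine (integral_tsum (fun n => (measurable_kint (iterK Q n) hf).aestronglyMeasurable) ?_).symm
  have hbd : ∀ n : ℕ, ∫⁻ y, ‖∫ z, f z ∂(iterK Q n y)‖₊ ∂(Q x)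
      ≤ ENNReal.ofReal Cf * iterK Q (n + 1) x Set.univ := by
    intro n
    have hpt : ∀ y : X, (‖∫ z, f z ∂(iterK Q n y)‖₊ : ℝ≥0∞)
        ≤ ENNReal.ofReal Cf * iterK Q n y Set.univ := by
      intro y
      calc (‖∫ z, f z ∂(iterK Q n y)‖₊ : ℝ≥0∞)
          = ENNReal.ofReal ‖∫ z, f z ∂(iterK Q n y)‖ := (ofReal_norm _).symm
        _ ≤ ENNReal.ofReal (Cf * (iterK Q n y Set.univ).toReal) :=
            ENNReal.ofReal_le_ofReal (norm_int_le Q hf Cf hbf n y)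
        _ = ENNReal.ofReal Cf * ENNReal.ofReal (iterK Q n y Set.univ).toReal := by
            rw [ENNReal.ofReal_mul hCf0]
        _ ≤ ENNReal.ofReal Cf * iterK Q n y Set.univ :=
            mul_le_mul_right ENNReal.ofReal_toReal_le _
    calc ∫⁻ y, ‖∫ z, f z ∂(iterK Q n y)‖₊ ∂(Q x)
        ≤ ∫⁻ y, ENNReal.ofReal Cf * iterK Q n y Set.univ ∂(Q x) := lintegral_mono hpt
      _ = ENNReal.ofReal Cf * ∫⁻ y, iterK Q n y Set.univ ∂(Q x) :=
          lintegral_const_mul _ ((iterK Q n).measurable_coe MeasurableSet.univ)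
      _ = ENNReal.ofReal Cf * iterK Q (n + 1) x Set.univ := by
          rw [iterK_succ', Kernel.comp_apply' _ _ _ MeasurableSet.univ]
  refine ne_of_lt (lt_of_le_of_lt (Summable.tsum_le_tsum hbd ENNReal.summable ENNReal.summable) ?_)
  rw [ENNReal.tsum_mul_left]
  refine ENNReal.mul_lt_top ENNReal.ofReal_lt_top ?_
  refine lt_of_le_of_lt ?_ hN
  exact tsum_comp_le_tsum_of_injective (add_left_injective 1) fun k => iterK Q k x Set.univ

end Aux

/-- For a substochastic kernel `Q` with finite occupation measure `M = Σₙ Qⁿ(·|x₀)` and a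
bounded measurable `f`, the function `v(x) = Σₙ E_x[f(Xₙ)] = Σₙ ∫ f dQⁿ(·|x)` satisfies
the Poisson-type equation `v(x) = f(x) + ∫ v dQ(·|x)` for `M`-a.e. `x`; moreover any
bounded measurable solution `w` of this equation coincides with `v` `M`-a.e. -/
theorem poisson_equation_and_uniqueness {X : Type*} [MeasurableSpace X]
    (Q : Kernel X X) (hsub : ∀ x, Q x Set.univ ≤ 1) (x₀ : X)
    (hM : (∑' n : ℕ, iterK Q n x₀ Set.univ) < ∞)
    (f : X → ℝ) (hf : Measurable f) (Cf : ℝ) (hbf : ∀ x, |f x| ≤ Cf) :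
    (∀ᵐ x ∂(Measure.sum fun n : ℕ => iterK Q n x₀),
        (∑' n : ℕ, ∫ y, f y ∂(iterK Q n x))
          = f x + ∫ y, (∑' n : ℕ, ∫ z, f z ∂(iterK Q n y)) ∂(Q x)) ∧
      ∀ w : X → ℝ, Measurable w → (∃ Cw : ℝ, ∀ x, |w x| ≤ Cw) →
        (∀ᵐ x ∂(Measure.sum fun n : ℕ => iterK Q n x₀),
          w x = f x + ∫ y, w y ∂(Q x)) →
        (∀ᵐ x ∂(Measure.sum fun n : ℕ => iterK Q n x₀),
          w x = ∑' n : ℕ, ∫ y, f y ∂(iterK Q n x)) := by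
  haveI hQf : IsFiniteKernel Q := ⟨⟨1, one_lt_top, fun x => hsub x⟩⟩
  have hCf0 : 0 ≤ Cf := le_trans (abs_nonneg _) (hbf x₀)
  constructor
  · filter_upwards [ae_N_lt_top Q x₀ hM] with x hx
    exact poisson_at Q hf Cf hCf0 hbf x hx
  · rintro w hw ⟨Cw, hbw⟩ hweq
    have hCw0 : 0 ≤ Cw := le_trans (abs_nonneg _) (hbw x₀)
    -- the measurable set where the Poisson equation for w holds
    set A : Set X := {x | w x = f x + ∫ y, w y ∂(Q x)} with hA
    have hAmeas : MeasurableSet A :=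
      measurableSet_eq_fun hw (hf.add (measurable_kint Q hw))
    have hMA : (Measure.sum fun n : ℕ => iterK Q n x₀) Aᶜ = 0 := by
      have := ae_iff.mp hweq
      simpa [A, Set.compl_setOf] using this
    -- for each k, Qᵏ(Aᶜ|x) = 0 for M-a.e. x
    have hAk : ∀ᵐ x ∂(Measure.sum fun n : ℕ => iterK Q n x₀),
        ∀ k : ℕ, iterK Q k x Aᶜ = 0 := by
      rw [ae_all_iff]
      intro k
      have hz : ∫⁻ x, iterK Q k x Aᶜ ∂(Measure.sum fun n : ℕ => iterK Q n x₀) = 0 := by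
        rw [lintegral_sum_measure]
        have heq : ∀ m : ℕ, ∫⁻ x, iterK Q k x Aᶜ ∂(iterK Q m x₀)
            = iterK Q (k + m) x₀ Aᶜ := by
          intro m
          rw [← Kernel.comp_apply' _ _ _ hAmeas.compl, iterK_comp]
        rw [tsum_congr heq]
        have hle : (∑' m : ℕ, iterK Q (k + m) x₀ Aᶜ)
            ≤ ∑' j : ℕ, iterK Q j x₀ Aᶜ := by
          have : ∀ m : ℕ, iterK Q (k + m) x₀ Aᶜ
              = (fun j => iterK Q j x₀ Aᶜ) ((fun m => m + k) m) := by
            intro m; simp [Nat.add_comm]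
          rw [tsum_congr this]
          exact tsum_comp_le_tsum_of_injective (add_left_injective k) _
        have hz2 : (∑' j : ℕ, iterK Q j x₀ Aᶜ) = 0 := by
          have := Measure.sum_apply (fun n : ℕ => iterK Q n x₀) hAmeas.compl
          rw [← this, hMA]
        exact le_antisymm (hz2 ▸ hle) zero_le
      have hmeas : Measurable fun x => iterK Q k x Aᶜ :=
        (iterK Q k).measurable_coe hAmeas.compl
      have := (lintegral_eq_zero_iff hmeas).mp hz
      filter_upwards [this] with x hx
      exact hx
    filter_upwards [ae_N_lt_top Q x₀ hM, hAk] with x hN hAkx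
    -- iterate the Poisson equation for w
    have hgmeas : Measurable fun y => ∫ z, w z ∂(Q y) := measurable_kint Q hw
    have hgb : ∀ y, |∫ z, w z ∂(Q y)| ≤ Cw := by
      intro y
      have h1 : ‖∫ z, w z ∂(Q y)‖ ≤ Cw * (Q y Set.univ).toReal :=
        norm_integral_le_of_norm_le_const
          (Filter.Eventually.of_forall fun z => by simpa [Real.norm_eq_abs] using hbw z)
      have h2 : (Q y Set.univ).toReal ≤ 1 := by
        have := ENNReal.toReal_mono (by norm_num) (hsub y)
        simpa using this
      calc |∫ z, w z ∂(Q y)| ≤ Cw * (Q y Set.univ).toReal := by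
            simpa [Real.norm_eq_abs] using h1
        _ ≤ Cw * 1 := by
            exact mul_le_mul_of_nonneg_left h2 hCw0
        _ = Cw := mul_one Cw
    have ind : ∀ k : ℕ, w x = (∑ j ∈ Finset.range k, ∫ y, f y ∂(iterK Q j x))
        + ∫ y, w y ∂(iterK Q k x) := by
      intro k
      induction k with
      | zero =>
          simp [iterK_zero, Kernel.id_apply, integral_dirac' w x hw.stronglyMeasurable]
      | succ k ih =>
          have hcongr : ∫ y, w y ∂(iterK Q k x)
              = ∫ y, (f y + ∫ z, w z ∂(Q y)) ∂(iterK Q k x) := by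
            refine integral_congr_ae ?_
            have : ∀ᵐ y ∂(iterK Q k x), y ∈ A := by
              rw [ae_iff]
              simpa [A, Set.compl_setOf] using hAkx k
            filter_upwards [this] with y hy
            exact hy
          have hint1 : Integrable f (iterK Q k x) := integrable_of_abs_le _ hf Cf hbf
          have hint2 : Integrable (fun y => ∫ z, w z ∂(Q y)) (iterK Q k x) :=
            integrable_of_abs_le _ hgmeas Cw hgb
          have hsplit : ∫ y, (f y + ∫ z, w z ∂(Q y)) ∂(iterK Q k x)
              = (∫ y, f y ∂(iterK Q k x)) + ∫ y, (∫ z, w z ∂(Q y)) ∂(iterK Q k x) :=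
            integral_add hint1 hint2
          have hcomp : ∫ y, (∫ z, w z ∂(Q y)) ∂(iterK Q k x)
              = ∫ z, w z ∂(iterK Q (k + 1) x) := by
            rw [iterK_succ, integral_comp' Q (iterK Q k) x hw Cw hbw]
          rw [ih, hcongr, hsplit, hcomp, Finset.sum_range_succ]
          ring
    -- take the limit k → ∞
    have hsum : Summable fun n => ∫ y, f y ∂(iterK Q n x) := summable_int Q hf Cf hbf x hN
    have hS : Filter.Tendsto (fun k => ∑ j ∈ Finset.range k, ∫ y, f y ∂(iterK Q j x))
        Filter.atTop (nhds (∑' n : ℕ, ∫ y, f y ∂(iterK Q n x))) :=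
      hsum.hasSum.tendsto_sum_nat
    have hr : Filter.Tendsto (fun k => ∫ y, w y ∂(iterK Q k x)) Filter.atTop (nhds 0) := by
      have hsum2 : Summable fun k => Cw * (iterK Q k x Set.univ).toReal :=
        (ENNReal.summable_toReal hN.ne).mul_left Cw
      refine squeeze_zero_norm (fun k => norm_int_le Q hw Cw hbw k x) ?_
      simpa using hsum2.tendsto_atTop_zero
    have hlim : Filter.Tendsto
        (fun k => (∑ j ∈ Finset.range k, ∫ y, f y ∂(iterK Q j x)) + ∫ y, w y ∂(iterK Q k x))
        Filter.atTop (nhds ((∑' n : ℕ, ∫ y, f y ∂(iterK Q n x)) + 0)) := hS.add hr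
    rw [add_zero] at hlim
    have hconst : Filter.Tendsto
        (fun k => (∑ j ∈ Finset.range k, ∫ y, f y ∂(iterK Q j x)) + ∫ y, w y ∂(iterK Q k x))
        Filter.atTop (nhds (w x)) := by
      have : (fun k => (∑ j ∈ Finset.range k, ∫ y, f y ∂(iterK Q j x))
          + ∫ y, w y ∂(iterK Q k x)) = fun _ => w x := by
        funext k; exact (ind k).symm
      rw [this]
      exact tendsto_const_nhds
    exact tendsto_nhds_unique hconst hlim
end
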